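/- Let F and F′ be permutations of GF(2^n) with F = A₁ ∘ F′ ∘ A₂, where A₁(x) = u₁x + v₁ and A₂(x) = u₂x + v₂ with u₁, u₂ ∈ GF(2^n) nonzero. Then for every c ∈ GF(2^n), the c-differential uniformity of F equals that of F′. -/

import Mathlib

/-- The number of solutions `x` of `F(x+a) + c·F(x) = b`. -/
noncomputable def cdCount (n : ℕ) (F : GaloisField 2 n → GaloisField 2 n)
    (c a b : GaloisField 2 n) : ℕ :=
  Nat.card {x : GaloisField 2 n // F (x + a) + c * F x = b}

/-- The `c`-differential uniformity of `F` (requiring `a ≠ 0` only when `c = 1`). -/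
noncomputable def cdu (n : ℕ) (F : GaloisField 2 n → GaloisField 2 n)
    (c : GaloisField 2 n) : ℕ :=
  sSup {k : ℕ | ∃ a b : GaloisField 2 n, (c = 1 → a ≠ 0) ∧ k = cdCount n F c a b}

lemma cdCount_affine (n : ℕ) (F F' : GaloisField 2 n → GaloisField 2 n)
    (u₁ v₁ u₂ v₂ : GaloisField 2 n) (hu₁ : u₁ ≠ 0) (hu₂ : u₂ ≠ 0)
    (hcomp : ∀ x, F x = u₁ * F' (u₂ * x + v₂) + v₁) (c a b : GaloisField 2 n) :
    cdCount n F c a b = cdCount n F' c (u₂ * a) (u₁⁻¹ * (b - v₁ - c * v₁)) := by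
  unfold cdCount
  apply Nat.card_congr
  refine Equiv.subtypeEquiv ⟨fun x => u₂ * x + v₂, fun y => u₂⁻¹ * (y - v₂),
    fun x => by field_simp; ring, fun y => by field_simp; ring⟩ (fun x => ?_)
  simp only [Equiv.coe_fn_mk]
  rw [hcomp, hcomp]
  have h1 : u₂ * (x + a) + v₂ = u₂ * x + v₂ + u₂ * a := by ring
  rw [h1]
  constructor
  · intro h
    field_simp
    linear_combination h
  · intro h
    field_simp at h
    linear_combination h

theorem stmt_7 (n : ℕ) (F F' : GaloisField 2 n → GaloisField 2 n)
    (hF : Function.Bijective F) (hF' : Function.Bijective F')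
    (u₁ v₁ u₂ v₂ : GaloisField 2 n) (hu₁ : u₁ ≠ 0) (hu₂ : u₂ ≠ 0)
    (hcomp : ∀ x, F x = u₁ * F' (u₂ * x + v₂) + v₁) :
    ∀ c : GaloisField 2 n, cdu n F c = cdu n F' c := by
  intro c
  unfold cdu
  congr 1
  ext k
  constructor
  · rintro ⟨a, b, ha, rfl⟩
    refine ⟨u₂ * a, u₁⁻¹ * (b - v₁ - c * v₁), fun hc => mul_ne_zero hu₂ (ha hc), ?_⟩
    exact cdCount_affine n F F' u₁ v₁ u₂ v₂ hu₁ hu₂ hcomp c a b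
  · rintro ⟨a, b, ha, rfl⟩
    refine ⟨u₂⁻¹ * a, u₁ * b + v₁ + c * v₁, fun hc => mul_ne_zero (inv_ne_zero hu₂) (ha hc), ?_⟩
    rw [cdCount_affine n F F' u₁ v₁ u₂ v₂ hu₁ hu₂ hcomp c]
    congr 1
    · field_simp
    · field_simp
      ring
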